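/- Define π on the span of the long roots of F_4 by π(e_1+e_2) = (a_1,0,0), π(e_1−e_2) = (b_1,b_1,b_1), π(e_3+e_4) = (b_1,b_2,b_2), π(e_3−e_4) = (b_1,b_3,b_3), where for a cyclic rotation (i,j,k) of (1,2,3), a_i = e_j − e_k and b_i = (e_j + e_k − 2e_i)/3 in ℝ³. Then π extends to a linear isometry of ℝ⁴ onto its image in ℝ⁹, and it maps the 24 long roots {±e_i ± e_j : 1 ≤ i < j ≤ 4} of F_4 bijectively onto the set ±{(a_i,0,0) : 1 ≤ i ≤ 3} ∪ ±{(b_i,b_j,b_j) : 1 ≤ i,j ≤ 3}. -/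

import Mathlib

open scoped RealInnerProductSpace

/-- The standard basis vector `e_i` of `ℝ⁴`. -/
noncomputable def e4 (i : Fin 4) : EuclideanSpace ℝ (Fin 4) :=
  EuclideanSpace.single i 1

/-- The standard basis vector `e_i` of `ℝ³`. -/
noncomputable def e3 (i : Fin 3) : EuclideanSpace ℝ (Fin 3) :=
  EuclideanSpace.single i 1

/-- `a_i = e_j − e_k` for `(i,j,k)` a cyclic rotation of `(1,2,3)`. -/
noncomputable def a (i : Fin 3) : EuclideanSpace ℝ (Fin 3) :=
  e3 (i + 1) - e3 (i + 2)

/-- `b_i = (e_j + e_k − 2e_i)/3` for `(i,j,k)` a cyclic rotation of `(1,2,3)`. -/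
noncomputable def b (i : Fin 3) : EuclideanSpace ℝ (Fin 3) :=
  (1 / 3 : ℝ) • (e3 (i + 1) + e3 (i + 2) - (2 : ℝ) • e3 i)

/-- `ℝ⁹` realized as triples `(r, s, t)` of vectors of `ℝ³`, with the `ℓ²` product
inner-product structure. -/
abbrev V9 : Type := PiLp 2 fun _ : Fin 3 => EuclideanSpace ℝ (Fin 3)

/-- The triple `(r, s, t) ∈ ℝ⁹`. -/
noncomputable def trip (r s t : EuclideanSpace ℝ (Fin 3)) : V9 :=
  (WithLp.equiv 2 _).symm ![r, s, t]

/-- Long roots of `F₄`: `±e_i ± e_j`, `i < j`. -/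
def LongF4 : Set (EuclideanSpace ℝ (Fin 4)) :=
  {v | ∃ i j : Fin 4, i < j ∧ ∃ ε δ : ℝ, (ε = 1 ∨ ε = -1) ∧ (δ = 1 ∨ δ = -1) ∧
    v = ε • e4 i + δ • e4 j}

/-- Imaginary roots of `E₆`: `±{(a_i,0,0)} ∪ ±{(b_i,b_j,b_j)}`. -/
noncomputable def ImE6 : Set V9 :=
  {v | (∃ i : Fin 3, v = trip (a i) 0 0 ∨ v = -trip (a i) 0 0) ∨
    (∃ i j : Fin 3, v = trip (b i) (b j) (b j) ∨ v = -trip (b i) (b j) (b j))}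

-- ### Auxiliary material

noncomputable def piFun (x : EuclideanSpace ℝ (Fin 4)) : V9 :=
  trip (-(x 0) • b 1 + (x 1) • b 2 + (x 2) • b 0)
       (((x 0 - x 1 - x 2)/2) • b 0 - ((x 3)/2) • a 0)
       (((x 0 - x 1 - x 2)/2) • b 0 - ((x 3)/2) • a 0)

lemma trip_app0 (r s t : EuclideanSpace ℝ (Fin 3)) : trip r s t 0 = r := rfl
lemma trip_app1 (r s t : EuclideanSpace ℝ (Fin 3)) : trip r s t 1 = s := rfl
lemma trip_app2 (r s t : EuclideanSpace ℝ (Fin 3)) : trip r s t 2 = t := rfl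

lemma piFun_app0 (x : EuclideanSpace ℝ (Fin 4)) (j : Fin 3) :
    piFun x 0 j = -(x 0) * b 1 j + (x 1) * b 2 j + (x 2) * b 0 j := rfl
lemma piFun_app1 (x : EuclideanSpace ℝ (Fin 4)) (j : Fin 3) :
    piFun x 1 j = ((x 0 - x 1 - x 2)/2) * b 0 j - ((x 3)/2) * a 0 j := rfl
lemma piFun_app2 (x : EuclideanSpace ℝ (Fin 4)) (j : Fin 3) :
    piFun x 2 j = ((x 0 - x 1 - x 2)/2) * b 0 j - ((x 3)/2) * a 0 j := rfl

lemma V9_ext {v w : V9} (h0 : v 0 = w 0) (h1 : v 1 = w 1) (h2 : v 2 = w 2) : v = w := by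
  apply PiLp.ext; intro i
  fin_cases i
  · exact h0
  · exact h1
  · exact h2

noncomputable def piLin : EuclideanSpace ℝ (Fin 4) →ₗ[ℝ] V9 where
  toFun := piFun
  map_add' x y := by
    have hx : ∀ k, (x + y) k = x k + y k := fun k => rfl
    refine V9_ext ?_ ?_ ?_ <;> ext j
    · show piFun (x+y) 0 j = piFun x 0 j + piFun y 0 j
      rw [piFun_app0, piFun_app0, piFun_app0, hx, hx, hx]; ring
    · show piFun (x+y) 1 j = piFun x 1 j + piFun y 1 j
      rw [piFun_app1, piFun_app1, piFun_app1, hx, hx, hx, hx]; ring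
    · show piFun (x+y) 2 j = piFun x 2 j + piFun y 2 j
      rw [piFun_app2, piFun_app2, piFun_app2, hx, hx, hx, hx]; ring
  map_smul' c x := by
    have hx : ∀ k, (c • x) k = c * x k := fun k => rfl
    refine V9_ext ?_ ?_ ?_ <;> ext j
    · show piFun (c • x) 0 j = c * piFun x 0 j
      rw [piFun_app0, piFun_app0, hx, hx, hx]; ring
    · show piFun (c • x) 1 j = c * piFun x 1 j
      rw [piFun_app1, piFun_app1, hx, hx, hx, hx]; ring
    · show piFun (c • x) 2 j = c * piFun x 2 j
      rw [piFun_app2, piFun_app2, hx, hx, hx, hx]; ring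

lemma a_apply (i j : Fin 3) :
    a i j = if j = i + 1 then 1 else if j = i + 2 then -1 else 0 := by
  fin_cases i <;> fin_cases j <;> simp [a, e3, EuclideanSpace.single_apply]
lemma b_apply (i j : Fin 3) :
    b i j = if j = i then -2/3 else 1/3 := by
  fin_cases i <;> fin_cases j <;> simp [b, e3, EuclideanSpace.single_apply] <;> norm_num
lemma e4_apply (i k : Fin 4) : e4 i k = if k = i then 1 else 0 :=
  EuclideanSpace.single_apply i 1 k

lemma add4_apply (x y : EuclideanSpace ℝ (Fin 4)) (k : Fin 4) : (x + y) k = x k + y k := rfl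
lemma sub4_apply (x y : EuclideanSpace ℝ (Fin 4)) (k : Fin 4) : (x - y) k = x k - y k := rfl
lemma neg9_apply (v : V9) (i : Fin 3) : (-v) i = -(v i) := rfl
lemma neg3_apply (v : EuclideanSpace ℝ (Fin 3)) (j : Fin 3) : (-v) j = -(v j) := rfl
lemma zero3_apply (j : Fin 3) : (0 : EuclideanSpace ℝ (Fin 3)) j = 0 := rfl

lemma inner_pi (x y : EuclideanSpace ℝ (Fin 4)) : ⟪piLin x, piLin y⟫ = ⟪x, y⟫ := by
  have hx : ∀ z, piLin z = piFun z := fun _ => rfl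
  rw [hx, hx]
  simp only [PiLp.inner_apply, RCLike.inner_apply, conj_trivial, Fin.sum_univ_three,
    Fin.sum_univ_four, piFun_app0, piFun_app1, piFun_app2]
  simp only [a_apply, b_apply]
  simp only [Fin.isValue, show ((0:Fin 3) = 0+1) = False from by simp, show ((0:Fin 3) = 0+2) = False from by simp,
    show ((1:Fin 3) = 0+1) = True from by simp, show ((1:Fin 3) = 0+2) = False from by simp,
    show ((2:Fin 3) = 0+1) = False from by simp, show ((2:Fin 3) = 0+2) = True from by simp,
    show ((0:Fin 3) = 1+1) = False from by simp, show ((0:Fin 3) = 1+2) = True from by simp,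
    show ((1:Fin 3) = 1+1) = False from by simp, show ((1:Fin 3) = 1+2) = False from by simp,
    show ((2:Fin 3) = 1+1) = True from by simp, show ((2:Fin 3) = 1+2) = False from by simp,
    show ((0:Fin 3) = 2+1) = True from by simp, show ((0:Fin 3) = 2+2) = False from by simp,
    show ((1:Fin 3) = 2+1) = False from by simp, show ((1:Fin 3) = 2+2) = True from by simp,
    show ((2:Fin 3) = 2+1) = False from by simp, show ((2:Fin 3) = 2+2) = False from by simp,
    show ((0:Fin 3) = 0) = True from by simp, show ((1:Fin 3) = 0) = False from by simp,
    show ((2:Fin 3) = 0) = False from by simp, show ((0:Fin 3) = 1) = False from by simp,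
    show ((1:Fin 3) = 1) = True from by simp, show ((2:Fin 3) = 1) = False from by simp,
    show ((0:Fin 3) = 2) = False from by simp, show ((1:Fin 3) = 2) = False from by simp,
    show ((2:Fin 3) = 2) = True from by simp, if_true, if_false, ite_true, ite_false]
  ring

noncomputable def piIso : EuclideanSpace ℝ (Fin 4) →ₗᵢ[ℝ] V9 :=
  piLin.isometryOfInner inner_pi

lemma piIso_eq (x : EuclideanSpace ℝ (Fin 4)) : piIso x = piFun x := rfl

lemma E1 : piIso (e4 0 + e4 1) = trip (a 0) 0 0 := by
  rw [piIso_eq]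
  refine V9_ext ?_ ?_ ?_ <;> ext j <;>
  simp only [piFun_app0, piFun_app1, piFun_app2, trip_app0, trip_app1, trip_app2,
    neg9_apply, neg3_apply, add4_apply, sub4_apply, zero3_apply] <;>
  fin_cases j <;> simp [a_apply, b_apply, e4_apply] <;> norm_num

lemma E2 : piIso (e4 0 - e4 1) = trip (b 0) (b 0) (b 0) := by
  rw [piIso_eq]
  refine V9_ext ?_ ?_ ?_ <;> ext j <;>
  simp only [piFun_app0, piFun_app1, piFun_app2, trip_app0, trip_app1, trip_app2,
    neg9_apply, neg3_apply, add4_apply, sub4_apply, zero3_apply] <;>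
  fin_cases j <;> simp [a_apply, b_apply, e4_apply] <;> norm_num

lemma E3 : piIso (e4 0 + e4 2) = -trip (a 2) 0 0 := by
  rw [piIso_eq]
  refine V9_ext ?_ ?_ ?_ <;> ext j <;>
  simp only [piFun_app0, piFun_app1, piFun_app2, trip_app0, trip_app1, trip_app2,
    neg9_apply, neg3_apply, add4_apply, sub4_apply, zero3_apply] <;>
  fin_cases j <;> simp [a_apply, b_apply, e4_apply] <;> norm_num

lemma E4 : piIso (e4 0 - e4 2) = trip (b 2) (b 0) (b 0) := by
  rw [piIso_eq]
  refine V9_ext ?_ ?_ ?_ <;> ext j <;>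
  simp only [piFun_app0, piFun_app1, piFun_app2, trip_app0, trip_app1, trip_app2,
    neg9_apply, neg3_apply, add4_apply, sub4_apply, zero3_apply] <;>
  fin_cases j <;> simp [a_apply, b_apply, e4_apply] <;> norm_num

lemma E5 : piIso (e4 0 + e4 3) = -trip (b 1) (b 2) (b 2) := by
  rw [piIso_eq]
  refine V9_ext ?_ ?_ ?_ <;> ext j <;>
  simp only [piFun_app0, piFun_app1, piFun_app2, trip_app0, trip_app1, trip_app2,
    neg9_apply, neg3_apply, add4_apply, sub4_apply, zero3_apply] <;>
  fin_cases j <;> simp [a_apply, b_apply, e4_apply] <;> norm_num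

lemma E6 : piIso (e4 0 - e4 3) = -trip (b 1) (b 1) (b 1) := by
  rw [piIso_eq]
  refine V9_ext ?_ ?_ ?_ <;> ext j <;>
  simp only [piFun_app0, piFun_app1, piFun_app2, trip_app0, trip_app1, trip_app2,
    neg9_apply, neg3_apply, add4_apply, sub4_apply, zero3_apply] <;>
  fin_cases j <;> simp [a_apply, b_apply, e4_apply] <;> norm_num

lemma E7 : piIso (e4 1 + e4 2) = -trip (b 1) (b 0) (b 0) := by
  rw [piIso_eq]
  refine V9_ext ?_ ?_ ?_ <;> ext j <;>
  simp only [piFun_app0, piFun_app1, piFun_app2, trip_app0, trip_app1, trip_app2,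
    neg9_apply, neg3_apply, add4_apply, sub4_apply, zero3_apply] <;>
  fin_cases j <;> simp [a_apply, b_apply, e4_apply] <;> norm_num

lemma E8 : piIso (e4 1 - e4 2) = -trip (a 1) 0 0 := by
  rw [piIso_eq]
  refine V9_ext ?_ ?_ ?_ <;> ext j <;>
  simp only [piFun_app0, piFun_app1, piFun_app2, trip_app0, trip_app1, trip_app2,
    neg9_apply, neg3_apply, add4_apply, sub4_apply, zero3_apply] <;>
  fin_cases j <;> simp [a_apply, b_apply, e4_apply] <;> norm_num

lemma E9 : piIso (e4 1 + e4 3) = trip (b 2) (b 1) (b 1) := by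
  rw [piIso_eq]
  refine V9_ext ?_ ?_ ?_ <;> ext j <;>
  simp only [piFun_app0, piFun_app1, piFun_app2, trip_app0, trip_app1, trip_app2,
    neg9_apply, neg3_apply, add4_apply, sub4_apply, zero3_apply] <;>
  fin_cases j <;> simp [a_apply, b_apply, e4_apply] <;> norm_num

lemma E10 : piIso (e4 1 - e4 3) = trip (b 2) (b 2) (b 2) := by
  rw [piIso_eq]
  refine V9_ext ?_ ?_ ?_ <;> ext j <;>
  simp only [piFun_app0, piFun_app1, piFun_app2, trip_app0, trip_app1, trip_app2,
    neg9_apply, neg3_apply, add4_apply, sub4_apply, zero3_apply] <;>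
  fin_cases j <;> simp [a_apply, b_apply, e4_apply] <;> norm_num

lemma E11 : piIso (e4 2 + e4 3) = trip (b 0) (b 1) (b 1) := by
  rw [piIso_eq]
  refine V9_ext ?_ ?_ ?_ <;> ext j <;>
  simp only [piFun_app0, piFun_app1, piFun_app2, trip_app0, trip_app1, trip_app2,
    neg9_apply, neg3_apply, add4_apply, sub4_apply, zero3_apply] <;>
  fin_cases j <;> simp [a_apply, b_apply, e4_apply] <;> norm_num

lemma E12 : piIso (e4 2 - e4 3) = trip (b 0) (b 2) (b 2) := by
  rw [piIso_eq]
  refine V9_ext ?_ ?_ ?_ <;> ext j <;>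
  simp only [piFun_app0, piFun_app1, piFun_app2, trip_app0, trip_app1, trip_app2,
    neg9_apply, neg3_apply, add4_apply, sub4_apply, zero3_apply] <;>
  fin_cases j <;> simp [a_apply, b_apply, e4_apply] <;> norm_num

lemma hfin4 : ∀ i : Fin 4, i = 0 ∨ i = 1 ∨ i = 2 ∨ i = 3 := by decide
lemma hfin3 : ∀ i : Fin 3, i = 0 ∨ i = 1 ∨ i = 2 := by decide

lemma mapsTo_pi : Set.MapsTo piIso LongF4 ImE6 := by
  rintro v ⟨i, j, hij, ε, δ, hε, hδ, rfl⟩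
  rcases hfin4 i with rfl|rfl|rfl|rfl <;> rcases hfin4 j with rfl|rfl|rfl|rfl <;>
    rcases hε with rfl|rfl <;> rcases hδ with rfl|rfl
  · exact absurd hij (by decide)
  · exact absurd hij (by decide)
  · exact absurd hij (by decide)
  · exact absurd hij (by decide)
  · refine Or.inl ⟨0, Or.inl ?_⟩
    rw [show ((1:ℝ) • e4 0 + (1:ℝ) • e4 1) = e4 0 + e4 1 from by module, E1]
  · refine Or.inr ⟨0, 0, Or.inl ?_⟩
    rw [show ((1:ℝ) • e4 0 + (-1:ℝ) • e4 1) = e4 0 - e4 1 from by module, E2]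
  · refine Or.inr ⟨0, 0, Or.inr ?_⟩
    rw [show ((-1:ℝ) • e4 0 + (1:ℝ) • e4 1) = -(e4 0 - e4 1) from by module, map_neg, E2]
  · refine Or.inl ⟨0, Or.inr ?_⟩
    rw [show ((-1:ℝ) • e4 0 + (-1:ℝ) • e4 1) = -(e4 0 + e4 1) from by module, map_neg, E1]
  · refine Or.inl ⟨2, Or.inr ?_⟩
    rw [show ((1:ℝ) • e4 0 + (1:ℝ) • e4 2) = e4 0 + e4 2 from by module, E3]
  · refine Or.inr ⟨2, 0, Or.inl ?_⟩
    rw [show ((1:ℝ) • e4 0 + (-1:ℝ) • e4 2) = e4 0 - e4 2 from by module, E4]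
  · refine Or.inr ⟨2, 0, Or.inr ?_⟩
    rw [show ((-1:ℝ) • e4 0 + (1:ℝ) • e4 2) = -(e4 0 - e4 2) from by module, map_neg, E4]
  · refine Or.inl ⟨2, Or.inl ?_⟩
    rw [show ((-1:ℝ) • e4 0 + (-1:ℝ) • e4 2) = -(e4 0 + e4 2) from by module, map_neg, E3, neg_neg]
  · refine Or.inr ⟨1, 2, Or.inr ?_⟩
    rw [show ((1:ℝ) • e4 0 + (1:ℝ) • e4 3) = e4 0 + e4 3 from by module, E5]
  · refine Or.inr ⟨1, 1, Or.inr ?_⟩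
    rw [show ((1:ℝ) • e4 0 + (-1:ℝ) • e4 3) = e4 0 - e4 3 from by module, E6]
  · refine Or.inr ⟨1, 1, Or.inl ?_⟩
    rw [show ((-1:ℝ) • e4 0 + (1:ℝ) • e4 3) = -(e4 0 - e4 3) from by module, map_neg, E6, neg_neg]
  · refine Or.inr ⟨1, 2, Or.inl ?_⟩
    rw [show ((-1:ℝ) • e4 0 + (-1:ℝ) • e4 3) = -(e4 0 + e4 3) from by module, map_neg, E5, neg_neg]
  · exact absurd hij (by decide)
  · exact absurd hij (by decide)
  · exact absurd hij (by decide)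
  · exact absurd hij (by decide)
  · exact absurd hij (by decide)
  · exact absurd hij (by decide)
  · exact absurd hij (by decide)
  · exact absurd hij (by decide)
  · refine Or.inr ⟨1, 0, Or.inr ?_⟩
    rw [show ((1:ℝ) • e4 1 + (1:ℝ) • e4 2) = e4 1 + e4 2 from by module, E7]
  · refine Or.inl ⟨1, Or.inr ?_⟩
    rw [show ((1:ℝ) • e4 1 + (-1:ℝ) • e4 2) = e4 1 - e4 2 from by module, E8]
  · refine Or.inl ⟨1, Or.inl ?_⟩
    rw [show ((-1:ℝ) • e4 1 + (1:ℝ) • e4 2) = -(e4 1 - e4 2) from by module, map_neg, E8, neg_neg]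
  · refine Or.inr ⟨1, 0, Or.inl ?_⟩
    rw [show ((-1:ℝ) • e4 1 + (-1:ℝ) • e4 2) = -(e4 1 + e4 2) from by module, map_neg, E7, neg_neg]
  · refine Or.inr ⟨2, 1, Or.inl ?_⟩
    rw [show ((1:ℝ) • e4 1 + (1:ℝ) • e4 3) = e4 1 + e4 3 from by module, E9]
  · refine Or.inr ⟨2, 2, Or.inl ?_⟩
    rw [show ((1:ℝ) • e4 1 + (-1:ℝ) • e4 3) = e4 1 - e4 3 from by module, E10]
  · refine Or.inr ⟨2, 2, Or.inr ?_⟩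
    rw [show ((-1:ℝ) • e4 1 + (1:ℝ) • e4 3) = -(e4 1 - e4 3) from by module, map_neg, E10]
  · refine Or.inr ⟨2, 1, Or.inr ?_⟩
    rw [show ((-1:ℝ) • e4 1 + (-1:ℝ) • e4 3) = -(e4 1 + e4 3) from by module, map_neg, E9]
  · exact absurd hij (by decide)
  · exact absurd hij (by decide)
  · exact absurd hij (by decide)
  · exact absurd hij (by decide)
  · exact absurd hij (by decide)
  · exact absurd hij (by decide)
  · exact absurd hij (by decide)
  · exact absurd hij (by decide)
  · exact absurd hij (by decide)
  · exact absurd hij (by decide)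
  · exact absurd hij (by decide)
  · exact absurd hij (by decide)
  · refine Or.inr ⟨0, 1, Or.inl ?_⟩
    rw [show ((1:ℝ) • e4 2 + (1:ℝ) • e4 3) = e4 2 + e4 3 from by module, E11]
  · refine Or.inr ⟨0, 2, Or.inl ?_⟩
    rw [show ((1:ℝ) • e4 2 + (-1:ℝ) • e4 3) = e4 2 - e4 3 from by module, E12]
  · refine Or.inr ⟨0, 2, Or.inr ?_⟩
    rw [show ((-1:ℝ) • e4 2 + (1:ℝ) • e4 3) = -(e4 2 - e4 3) from by module, map_neg, E12]
  · refine Or.inr ⟨0, 1, Or.inr ?_⟩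
    rw [show ((-1:ℝ) • e4 2 + (-1:ℝ) • e4 3) = -(e4 2 + e4 3) from by module, map_neg, E11]
  · exact absurd hij (by decide)
  · exact absurd hij (by decide)
  · exact absurd hij (by decide)
  · exact absurd hij (by decide)
  · exact absurd hij (by decide)
  · exact absurd hij (by decide)
  · exact absurd hij (by decide)
  · exact absurd hij (by decide)
  · exact absurd hij (by decide)
  · exact absurd hij (by decide)
  · exact absurd hij (by decide)
  · exact absurd hij (by decide)
  · exact absurd hij (by decide)
  · exact absurd hij (by decide)
  · exact absurd hij (by decide)
  · exact absurd hij (by decide)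

lemma surjOn_pi : Set.SurjOn piIso LongF4 ImE6 := by
  rintro v (⟨i, h | h⟩ | ⟨i, j, h | h⟩)
  · rcases hfin3 i with rfl|rfl|rfl
    · refine ⟨e4 0 + e4 1, ⟨0, 1, by decide, 1, 1, Or.inl rfl, Or.inl rfl, by module⟩, ?_⟩
      rw [h, E1]
    · refine ⟨-(e4 1 - e4 2), ⟨1, 2, by decide, -1, 1, Or.inr rfl, Or.inl rfl, by module⟩, ?_⟩
      rw [h, piIso.map_neg, E8, neg_neg]
    · refine ⟨-(e4 0 + e4 2), ⟨0, 2, by decide, -1, -1, Or.inr rfl, Or.inr rfl, by module⟩, ?_⟩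
      rw [h, piIso.map_neg, E3, neg_neg]
  · rcases hfin3 i with rfl|rfl|rfl
    · refine ⟨-(e4 0 + e4 1), ⟨0, 1, by decide, -1, -1, Or.inr rfl, Or.inr rfl, by module⟩, ?_⟩
      rw [h, piIso.map_neg, E1]
    · refine ⟨e4 1 - e4 2, ⟨1, 2, by decide, 1, -1, Or.inl rfl, Or.inr rfl, by module⟩, ?_⟩
      rw [h, E8]
    · refine ⟨e4 0 + e4 2, ⟨0, 2, by decide, 1, 1, Or.inl rfl, Or.inl rfl, by module⟩, ?_⟩
      rw [h, E3]
  · rcases hfin3 i with rfl|rfl|rfl <;> rcases hfin3 j with rfl|rfl|rfl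
    · refine ⟨e4 0 - e4 1, ⟨0, 1, by decide, 1, -1, Or.inl rfl, Or.inr rfl, by module⟩, ?_⟩
      rw [h, E2]
    · refine ⟨e4 2 + e4 3, ⟨2, 3, by decide, 1, 1, Or.inl rfl, Or.inl rfl, by module⟩, ?_⟩
      rw [h, E11]
    · refine ⟨e4 2 - e4 3, ⟨2, 3, by decide, 1, -1, Or.inl rfl, Or.inr rfl, by module⟩, ?_⟩
      rw [h, E12]
    · refine ⟨-(e4 1 + e4 2), ⟨1, 2, by decide, -1, -1, Or.inr rfl, Or.inr rfl, by module⟩, ?_⟩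
      rw [h, piIso.map_neg, E7, neg_neg]
    · refine ⟨-(e4 0 - e4 3), ⟨0, 3, by decide, -1, 1, Or.inr rfl, Or.inl rfl, by module⟩, ?_⟩
      rw [h, piIso.map_neg, E6, neg_neg]
    · refine ⟨-(e4 0 + e4 3), ⟨0, 3, by decide, -1, -1, Or.inr rfl, Or.inr rfl, by module⟩, ?_⟩
      rw [h, piIso.map_neg, E5, neg_neg]
    · refine ⟨e4 0 - e4 2, ⟨0, 2, by decide, 1, -1, Or.inl rfl, Or.inr rfl, by module⟩, ?_⟩
      rw [h, E4]
    · refine ⟨e4 1 + e4 3, ⟨1, 3, by decide, 1, 1, Or.inl rfl, Or.inl rfl, by module⟩, ?_⟩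
      rw [h, E9]
    · refine ⟨e4 1 - e4 3, ⟨1, 3, by decide, 1, -1, Or.inl rfl, Or.inr rfl, by module⟩, ?_⟩
      rw [h, E10]
  · rcases hfin3 i with rfl|rfl|rfl <;> rcases hfin3 j with rfl|rfl|rfl
    · refine ⟨-(e4 0 - e4 1), ⟨0, 1, by decide, -1, 1, Or.inr rfl, Or.inl rfl, by module⟩, ?_⟩
      rw [h, piIso.map_neg, E2]
    · refine ⟨-(e4 2 + e4 3), ⟨2, 3, by decide, -1, -1, Or.inr rfl, Or.inr rfl, by module⟩, ?_⟩
      rw [h, piIso.map_neg, E11]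
    · refine ⟨-(e4 2 - e4 3), ⟨2, 3, by decide, -1, 1, Or.inr rfl, Or.inl rfl, by module⟩, ?_⟩
      rw [h, piIso.map_neg, E12]
    · refine ⟨e4 1 + e4 2, ⟨1, 2, by decide, 1, 1, Or.inl rfl, Or.inl rfl, by module⟩, ?_⟩
      rw [h, E7]
    · refine ⟨e4 0 - e4 3, ⟨0, 3, by decide, 1, -1, Or.inl rfl, Or.inr rfl, by module⟩, ?_⟩
      rw [h, E6]
    · refine ⟨e4 0 + e4 3, ⟨0, 3, by decide, 1, 1, Or.inl rfl, Or.inl rfl, by module⟩, ?_⟩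
      rw [h, E5]
    · refine ⟨-(e4 0 - e4 2), ⟨0, 2, by decide, -1, 1, Or.inr rfl, Or.inl rfl, by module⟩, ?_⟩
      rw [h, piIso.map_neg, E4]
    · refine ⟨-(e4 1 + e4 3), ⟨1, 3, by decide, -1, -1, Or.inr rfl, Or.inr rfl, by module⟩, ?_⟩
      rw [h, piIso.map_neg, E9]
    · refine ⟨-(e4 1 - e4 3), ⟨1, 3, by decide, -1, 1, Or.inr rfl, Or.inl rfl, by module⟩, ?_⟩
      rw [h, piIso.map_neg, E10]


/-- The assignment `π(e₁+e₂) = (a₁,0,0)`, `π(e₁−e₂) = (b₁,b₁,b₁)`,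
`π(e₃+e₄) = (b₁,b₂,b₂)`, `π(e₃−e₄) = (b₁,b₃,b₃)` extends to a linear isometry of `ℝ⁴`
into `ℝ⁹` mapping the 24 long roots of `F₄` bijectively onto the imaginary roots of
`E₆`. -/
theorem isometry_F4_to_E6 :
    ∃ π : EuclideanSpace ℝ (Fin 4) →ₗᵢ[ℝ] V9,
      π (e4 0 + e4 1) = trip (a 0) 0 0 ∧
      π (e4 0 - e4 1) = trip (b 0) (b 0) (b 0) ∧
      π (e4 2 + e4 3) = trip (b 0) (b 1) (b 1) ∧
      π (e4 2 - e4 3) = trip (b 0) (b 2) (b 2) ∧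
      Set.BijOn π LongF4 ImE6 := by
  exact ⟨piIso, E1, E2, E11, E12, mapsTo_pi, piIso.injective.injOn, surjOn_pi⟩
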